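/- arXiv:1907.03158 — 2 statements merged into one kernel-verified Lean document; each statement's English description precedes it below -/
import Mathlib

section
/- For any tree T, every edge of the γ-graph T(γ) is either a cut-edge of T(γ) or is contained in a cycle of length 4 in T(γ). -/
open SimpleGraph Finset

/-- The closed neighbourhood of a vertex. -/
def closedNbhd {V : Type} (G : SimpleGraph V) (x : V) : Set V :=
  {y | y = x ∨ G.Adj x y}

/-- `D` is a dominating set of `G`. -/
def isDomSet {V : Type} [Fintype V] [DecidableEq V] (G : SimpleGraph V) (D : Finset V) : Prop :=
  ∀ v : V, ∃ d ∈ D, v ∈ closedNbhd G d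

/-- `D` is a minimum dominating set (γ-set) of `G`. -/
def isMinDomSet {V : Type} [Fintype V] [DecidableEq V] (G : SimpleGraph V) (D : Finset V) : Prop :=
  isDomSet G D ∧ ∀ D' : Finset V, isDomSet G D' → D.card ≤ D'.card

/-- The set of `D`-private neighbours of `x`: vertices in `N[x]` not in the closed
neighbourhood of any other vertex of `D`. -/
def privN {V : Type} [Fintype V] [DecidableEq V] (G : SimpleGraph V) (D : Finset V) (x : V) :
    Set V :=
  {y | y ∈ closedNbhd G x ∧ ∀ z ∈ D, z ≠ x → y ∉ closedNbhd G z}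

/-- The γ-graph of `G`: vertices are the γ-sets of `G`, two γ-sets adjacent iff they differ
by a swap of two adjacent vertices. -/
def gammaGraph {V : Type} [Fintype V] [DecidableEq V] (G : SimpleGraph V) :
    SimpleGraph {D : Finset V // isMinDomSet G D} where
  Adj D₁ D₂ := D₁ ≠ D₂ ∧ ∃ u v : V, G.Adj u v ∧
    (D₂.1 = (D₁.1 \ {u}) ∪ {v} ∨ D₁.1 = (D₂.1 \ {u}) ∪ {v})
  symm := by
    constructor
    rintro D₁ D₂ ⟨hne, u, v, huv, h | h⟩
    · exact ⟨hne.symm, u, v, huv, Or.inr h⟩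
    · exact ⟨hne.symm, u, v, huv, Or.inl h⟩
  loopless := by constructor; rintro D ⟨hne, -⟩; exact hne rfl

namespace Gamma17

variable {V : Type} [Fintype V] [DecidableEq V] {T : SimpleGraph V}

/-! ### Basic finset lemmas -/

lemma mem_cn {x p : V} : p ∈ closedNbhd T x ↔ (p = x ∨ T.Adj x p) := Iff.rfl

lemma sdiff_union_eq (R : Finset V) (w x : V) :
    (R \ {w}) ∪ {x} = insert x (R.erase w) := by
  rw [Finset.union_comm, ← Finset.insert_eq, Finset.erase_eq]

lemma minCard_eq {A B : Finset V} (h1 : isMinDomSet T A) (h2 : isMinDomSet T B) :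
    A.card = B.card :=
  le_antisymm (h1.2 B h2.1) (h2.2 A h1.1)

lemma swapMin {R : Finset V} {w x : V} (hR : isMinDomSet T R) (hw : w ∈ R) (hx : x ∉ R)
    (hdom : isDomSet T (insert x (R.erase w))) : isMinDomSet T (insert x (R.erase w)) := by
  have hxe : x ∉ R.erase w := fun h => hx (Finset.mem_of_mem_erase h)
  have hcard : (insert x (R.erase w)).card = R.card := by
    rw [Finset.card_insert_of_notMem hxe, Finset.card_erase_of_mem hw]
    have : 0 < R.card := Finset.card_pos.2 ⟨w, hw⟩
    omega
  exact ⟨hdom, fun D' hD' => hcard ▸ hR.2 D' hD'⟩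

/-! ### Canonical form of γ-graph adjacency -/

lemma adj_canon {P Q : {D : Finset V // isMinDomSet T D}} (h : (gammaGraph T).Adj P Q) :
    ∃ a b, T.Adj a b ∧ a ∈ P.1 ∧ b ∉ P.1 ∧ Q.1 = insert b (P.1.erase a) := by
  obtain ⟨hne, a, b, hab, hQ | hP⟩ := h
  · rw [sdiff_union_eq] at hQ
    have hcard : P.1.card = Q.1.card := minCard_eq P.2 Q.2
    have hba : b ≠ a := hab.ne'
    have haP : a ∈ P.1 := by
      by_contra haP
      rw [Finset.erase_eq_of_notMem haP] at hQ
      by_cases hbP : b ∈ P.1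
      · refine hne (Subtype.ext ?_)
        rw [hQ, Finset.insert_eq_self.2 hbP]
      · have : Q.1.card = P.1.card + 1 := by rw [hQ, Finset.card_insert_of_notMem hbP]
        omega
    have hbP : b ∉ P.1 := by
      by_contra hbP
      have hbe : b ∈ P.1.erase a := Finset.mem_erase.2 ⟨hba, hbP⟩
      have : Q.1.card = P.1.card - 1 := by
        rw [hQ, Finset.insert_eq_self.2 hbe, Finset.card_erase_of_mem haP]
      have hpos : 0 < P.1.card := Finset.card_pos.2 ⟨a, haP⟩
      omega
    exact ⟨a, b, hab, haP, hbP, hQ⟩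
  · rw [sdiff_union_eq] at hP
    have hcard : Q.1.card = P.1.card := minCard_eq Q.2 P.2
    have hba : b ≠ a := hab.ne'
    have haQ : a ∈ Q.1 := by
      by_contra haQ
      rw [Finset.erase_eq_of_notMem haQ] at hP
      by_cases hbQ : b ∈ Q.1
      · apply hne
        apply Subtype.ext
        rw [hP, Finset.insert_eq_self.2 hbQ]
      · have : P.1.card = Q.1.card + 1 := by rw [hP, Finset.card_insert_of_notMem hbQ]
        omega
    have hbQ : b ∉ Q.1 := by
      by_contra hbQ
      have hbe : b ∈ Q.1.erase a := Finset.mem_erase.2 ⟨hba, hbQ⟩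
      have : P.1.card = Q.1.card - 1 := by
        rw [hP, Finset.insert_eq_self.2 hbe, Finset.card_erase_of_mem haQ]
      have hpos : 0 < Q.1.card := Finset.card_pos.2 ⟨a, haQ⟩
      omega
    refine ⟨b, a, hab.symm, ?_, ?_, ?_⟩
    · rw [hP]; exact Finset.mem_insert_self _ _
    · rw [hP]
      intro hmem
      rcases Finset.mem_insert.1 hmem with h1 | h1
      · exact hba h1.symm
      · exact (Finset.mem_erase.1 h1).1 rfl
    · have hbne : b ∉ Q.1.erase a := fun hc => hbQ (Finset.mem_of_mem_erase hc)
      rw [hP, Finset.erase_insert hbne, Finset.insert_erase haQ]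

lemma adj_mk {P Q : {D : Finset V // isMinDomSet T D}} {a b : V} (hab : T.Adj a b)
    (ha : a ∈ P.1) (hb : b ∉ P.1) (hQ : Q.1 = insert b (P.1.erase a)) :
    (gammaGraph T).Adj P Q := by
  refine ⟨?_, a, b, hab, Or.inl (by rw [sdiff_union_eq]; exact hQ)⟩
  intro heq
  apply hb
  have : b ∈ Q.1 := hQ ▸ Finset.mem_insert_self _ _
  rwa [← heq] at this

lemma ne_of_mem_not_mem {P Q : {D : Finset V // isMinDomSet T D}} {a : V}
    (ha : a ∈ P.1) (hb : a ∉ Q.1) : P ≠ Q := fun h => hb (h ▸ ha)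

/-! ### Tree metric lemmas -/

lemma isPath_length_eq_dist (hT : T.IsTree) {a b : V} (p : T.Walk a b) (hp : p.IsPath) :
    p.length = T.dist a b := by
  obtain ⟨q, hq⟩ := hT.isConnected.exists_walk_length_eq_dist a b
  have h1 : p = q.bypass := (hT.existsUnique_path a b).unique hp q.bypass_isPath
  refine le_antisymm ?_ (SimpleGraph.dist_le p)
  rw [h1]
  exact le_trans (Walk.length_bypass_le q) hq.le

lemma dist_split (hT : T.IsTree) {r z c : V} (p : T.Walk r z) (hp : p.IsPath)
    (hc : c ∈ p.support) : T.dist r z = T.dist r c + T.dist c z := by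
  have h1 := isPath_length_eq_dist hT _ (hp.takeUntil hc)
  have h2 := isPath_length_eq_dist hT _ (hp.dropUntil hc)
  have h3 : (p.takeUntil c hc).length + (p.dropUntil c hc).length = p.length := by
    rw [← Walk.length_append, Walk.take_spec]
  rw [← isPath_length_eq_dist hT p hp, ← h1, ← h2, h3]

lemma concat_isPath (hT : T.IsTree) {r z c : V} {p : T.Walk r z} (hp : p.IsPath)
    (h : T.Adj z c) (hc : c ∉ p.support) : (p.concat h).IsPath := by
  rw [← Walk.isPath_reverse_iff, Walk.reverse_concat]
  refine Walk.IsPath.cons ((Walk.isPath_reverse_iff p).2 hp) ?_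
  rw [Walk.support_reverse]
  simpa using hc

/-- Adjacent vertices have distances from any root differing by exactly one. -/
lemma adj_dist_aux (hT : T.IsTree) (r : V) {z c : V} (h : T.Adj z c) :
    T.dist r z + 1 = T.dist r c ∨ T.dist r c + 1 = T.dist r z := by
  have hzc : T.dist z c = 1 := SimpleGraph.dist_eq_one_iff_adj.2 h
  have hcz : T.dist c z = 1 := SimpleGraph.dist_eq_one_iff_adj.2 h.symm
  have hub1 : T.dist r c ≤ T.dist r z + 1 := by
    have := hT.isConnected.dist_triangle (u := r) (v := z) (w := c)
    omega
  have hub2 : T.dist r z ≤ T.dist r c + 1 := by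
    have := hT.isConnected.dist_triangle (u := r) (v := c) (w := z)
    omega
  have hne : T.dist r z ≠ T.dist r c := by
    intro heq
    obtain ⟨p, hp, -⟩ := hT.existsUnique_path r z
    by_cases hcs : c ∈ p.support
    · have hsplit := dist_split hT p hp hcs
      have hpos : 0 < T.dist c z := hT.isConnected.pos_dist_of_ne h.ne'
      omega
    · have hq : (p.concat h).IsPath := concat_isPath hT hp h hcs
      have hlen := isPath_length_eq_dist hT _ hq
      rw [Walk.length_concat, isPath_length_eq_dist hT p hp] at hlen
      omega
  omega

/-- Uniqueness of the neighbour closer to the root. -/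
lemma parent_unique (hT : T.IsTree) {r c z₁ z₂ : V} (h₁ : T.Adj z₁ c) (h₂ : T.Adj z₂ c)
    (d₁ : T.dist r z₁ + 1 = T.dist r c) (d₂ : T.dist r z₂ + 1 = T.dist r c) : z₁ = z₂ := by
  obtain ⟨p₁, hp₁, -⟩ := hT.existsUnique_path r z₁
  obtain ⟨p₂, hp₂, -⟩ := hT.existsUnique_path r z₂
  have hc₁ : c ∉ p₁.support := by
    intro hc
    have hsplit := dist_split hT p₁ hp₁ hc
    have hpos : 0 < T.dist c z₁ := hT.isConnected.pos_dist_of_ne (fun he => h₁.ne he.symm)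
    omega
  have hc₂ : c ∉ p₂.support := by
    intro hc
    have hsplit := dist_split hT p₂ hp₂ hc
    have hpos : 0 < T.dist c z₂ := hT.isConnected.pos_dist_of_ne (fun he => h₂.ne he.symm)
    omega
  have hq₁ : (p₁.concat h₁).IsPath := concat_isPath hT hp₁ h₁ hc₁
  have hq₂ : (p₂.concat h₂).IsPath := concat_isPath hT hp₂ h₂ hc₂
  have heq := (hT.existsUnique_path r c).unique hq₁ hq₂
  obtain ⟨hv, -⟩ := Walk.concat_inj heq
  exact hv

/-- Existence of the parent: a neighbour one step closer to the root. -/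
lemma parent_exists (hT : T.IsTree) {r c : V} (h : r ≠ c) :
    ∃ π, T.Adj π c ∧ T.dist r π + 1 = T.dist r c := by
  obtain ⟨q, hq⟩ := hT.isConnected.exists_walk_length_eq_dist c r
  cases q with
  | nil => exact absurd rfl h.symm
  | @cons _ π _ hadj w' =>
    have h1 : T.dist π r ≤ w'.length := SimpleGraph.dist_le w'
    rw [Walk.length_cons] at hq
    have hπc : T.dist π c = 1 := SimpleGraph.dist_eq_one_iff_adj.2 hadj.symm
    have h2 : T.dist r c ≤ T.dist r π + 1 := by
      have := hT.isConnected.dist_triangle (u := r) (v := π) (w := c)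
      omega
    have h3 : T.dist c r = T.dist r c := SimpleGraph.dist_comm
    have h4 : T.dist π r = T.dist r π := SimpleGraph.dist_comm
    have hpos : 0 < T.dist r c := hT.isConnected.pos_dist_of_ne h
    exact ⟨π, hadj.symm, by omega⟩

/-- In a tree, adjacent vertices have no common closed neighbours besides themselves. -/
lemma no_common (hT : T.IsTree) {u v p : V} (huv : T.Adj u v)
    (hpu : p = u ∨ T.Adj u p) (hpv : p = v ∨ T.Adj v p) : p = u ∨ p = v := by
  rcases hpu with rfl | hu
  · exact Or.inl rfl
  rcases hpv with rfl | hv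
  · exact Or.inr rfl
  exfalso
  have h1 : T.dist p u = 1 := SimpleGraph.dist_eq_one_iff_adj.2 hu.symm
  have h2 : T.dist p v = 1 := SimpleGraph.dist_eq_one_iff_adj.2 hv.symm
  rcases adj_dist_aux hT p huv with h3 | h3 <;> omega

/-- The cut lemma: the unique edge of the tree crossing the `uv`-cut is `uv` itself. -/
lemma cut_lemma (hT : T.IsTree) {u v a b : V} (huv : T.Adj u v) (hab : T.Adj a b)
    (ha : T.dist a u < T.dist a v) (hb : ¬T.dist b u < T.dist b v) : a = u ∧ b = v := by
  have hA : T.dist a u + 1 = T.dist a v := by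
    rcases adj_dist_aux hT a huv with h | h <;> omega
  have hB : T.dist b v + 1 = T.dist b u := by
    rcases adj_dist_aux hT b huv with h | h <;> omega
  by_cases hbv : b = v
  · subst hbv
    have hav : T.dist a b = 1 := SimpleGraph.dist_eq_one_iff_adj.2 hab
    have hc1 : T.dist a b = T.dist a b := rfl
    have hau : T.dist a u = 0 := by omega
    have : a = u := by
      have := (hT.isConnected.dist_eq_zero_iff (u := a) (v := u)).1 hau
      exact this
    exact ⟨this, rfl⟩
  · exfalso
    obtain ⟨π, hπb, hπd⟩ := parent_exists hT (show v ≠ b from fun h => hbv h.symm)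
    -- normalize orientations
    have c1 : T.dist u π = T.dist π u := SimpleGraph.dist_comm
    have c2 : T.dist u b = T.dist b u := SimpleGraph.dist_comm
    have c3 : T.dist v π = T.dist π v := SimpleGraph.dist_comm
    have c4 : T.dist v b = T.dist b v := SimpleGraph.dist_comm
    have c5 : T.dist u a = T.dist a u := SimpleGraph.dist_comm
    have c6 : T.dist v a = T.dist a v := SimpleGraph.dist_comm
    have hπu : T.dist u π + 1 = T.dist u b := by
      rcases adj_dist_aux hT u hπb with h | h <;>
        rcases adj_dist_aux hT π huv with h' | h' <;> omega
    have hau' : T.dist u a + 1 = T.dist u b := by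
      rcases adj_dist_aux hT u hab with h | h <;>
        rcases adj_dist_aux hT v hab with h' | h' <;> omega
    have hπa : π = a := parent_unique hT hπb hab hπu hau'
    subst hπa
    omega

/-! ### The core exchange lemma -/

lemma core (hT : T.IsTree) {u v : V} (huv : T.Adj u v)
    {R S : Finset V} (hRmin : isMinDomSet T R)
    (hR' : isDomSet T (insert u (R.erase v)))
    (hS : isDomSet T S) (hS' : isDomSet T (insert u (S.erase v)))
    (hvR : v ∈ R) (huR : u ∉ R) (hvS : v ∈ S) (huS : u ∉ S)
    {w : V} (hwR : w ∈ R) (hwS : w ∉ S)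
    (hmax : ∀ z, (z ∈ R ∧ z ∉ S) ∨ (z ∈ S ∧ z ∉ R) → T.dist v z ≤ T.dist v w) :
    ∃ x, T.Adj w x ∧ x ∉ R ∧ x ≠ u ∧ T.dist v x + 1 = T.dist v w ∧
      isDomSet T (insert x (R.erase w)) ∧
      isDomSet T (insert x ((insert u (R.erase v)).erase w)) := by
  have hwv : w ≠ v := fun h => hwS (h ▸ hvS)
  have hwu : w ≠ u := fun h => huR (h ▸ hwR)
  obtain ⟨π, hπw, hπd⟩ := parent_exists hT (Ne.symm hwv)
  -- Claim 2 (with extra info for the p = w case)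
  have claim2 : ∀ p, p ∈ closedNbhd T w →
      (∀ z ∈ R, z ≠ v → z ≠ w → p ∉ closedNbhd T z) → p ≠ u → p ≠ v →
      (p = w ∧ π ∈ S ∧ π ∉ R) ∨ p = π := by
    intro p hpw hpriv hpu hpv
    -- Claim 1: get an S-dominator of p outside R
    have hclaim1 : ∃ s, s ∈ S ∧ s ∉ R ∧ p ∈ closedNbhd T s := by
      obtain ⟨s₁, hs₁S, hps₁⟩ := hS p
      by_cases hs₁v : s₁ = v
      · obtain ⟨s₂, hs₂, hps₂⟩ := hS' p
        have hps₁v : p ∈ closedNbhd T v := hs₁v ▸ hps₁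
        rcases Finset.mem_insert.1 hs₂ with h2u | h2e
        · exfalso
          have hps₂u : p ∈ closedNbhd T u := h2u ▸ hps₂
          rcases no_common hT huv.symm (mem_cn.1 hps₁v) (mem_cn.1 hps₂u) with h | h
          · exact hpv h
          · exact hpu h
        · refine ⟨s₂, Finset.mem_of_mem_erase h2e, ?_, hps₂⟩
          intro hs₂R
          have hs₂v : s₂ ≠ v := (Finset.mem_erase.1 h2e).1
          have hs₂w : s₂ ≠ w := fun h => hwS (h ▸ Finset.mem_of_mem_erase h2e)
          exact hpriv s₂ hs₂R hs₂v hs₂w hps₂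
      · refine ⟨s₁, hs₁S, ?_, hps₁⟩
        intro hs₁R
        have hs₁w : s₁ ≠ w := fun h => hwS (h ▸ hs₁S)
        exact hpriv s₁ hs₁R hs₁v hs₁w hps₁
    obtain ⟨s, hsS, hsR, hps⟩ := hclaim1
    have hsw : s ≠ w := fun h => hwS (h ▸ hsS)
    have hsd : T.dist v s ≤ T.dist v w := hmax s (Or.inr ⟨hsS, hsR⟩)
    rcases mem_cn.1 hpw with hpw_eq | hpw_adj
    · -- p = w
      rcases mem_cn.1 hps with hps_eq | hps_adj
      · exact absurd (hpw_eq.symm.trans hps_eq).symm hsw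
      · -- Adj s w; s is closer, so s = π
        have hsw' : T.Adj s w := hpw_eq ▸ hps_adj
        have hds : T.dist v s + 1 = T.dist v w := by
          rcases adj_dist_aux hT v hsw' with h | h <;> omega
        have hsπ : s = π := parent_unique hT hsw' hπw hds hπd
        exact Or.inl ⟨hpw_eq, hsπ ▸ hsS, hsπ ▸ hsR⟩
    · -- T.Adj w p
      by_cases hpπ : p = π
      · exact Or.inr hpπ
      exfalso
      have hdp : T.dist v w + 1 = T.dist v p := by
        rcases adj_dist_aux hT v hpw_adj with h | h
        · exact h
        · exact absurd (parent_unique hT hpw_adj.symm hπw h hπd) hpπ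
      rcases mem_cn.1 hps with hps_eq | hps_adj
      · rw [hps_eq] at hdp
        omega
      · rcases adj_dist_aux hT v hps_adj with h | h
        · -- s is the parent of p, but so is w
          exact hsw (parent_unique hT (r := v) hps_adj hpw_adj (by omega) hdp)
        · omega
  -- Claim 3 : π ∉ R and π ≠ u
  have claim3 : π ∉ R ∧ π ≠ u := by
    by_contra hcon
    have hπRu : π ∈ R ∨ π = u := by
      by_cases h1 : π ∈ R
      · exact Or.inl h1
      · by_cases h2 : π = u
        · exact Or.inr h2
        · exact absurd ⟨h1, h2⟩ hcon
    -- no "private" vertices at all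
    have hPempty : ∀ p, p ∈ closedNbhd T w →
        (∀ z ∈ R, z ≠ v → z ≠ w → p ∉ closedNbhd T z) → p ≠ u → p ≠ v → False := by
      intro p h1 h2 h3 h4
      rcases claim2 p h1 h2 h3 h4 with ⟨-, hπS, hπR⟩ | hpπ
      · rcases hπRu with h | h
        · exact hπR h
        · exact huS (h ▸ hπS)
      · rcases hπRu with h | h
        · refine h2 π (by exact h) (fun he => h4 (hpπ.trans he))
            (fun he => hπw.ne he) ?_
          exact mem_cn.2 (Or.inl hpπ)
        · exact h3 (hpπ.trans h)
    -- hence R.erase w is dominating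
    have hdom : isDomSet T (R.erase w) := by
      intro q
      obtain ⟨d, hdR, hqd⟩ := hRmin.1 q
      by_cases hdw : d = w
      · replace hqd : q ∈ closedNbhd T w := hdw ▸ hqd
        by_cases halt : ∃ z ∈ R.erase w, q ∈ closedNbhd T z
        · exact halt
        · push_neg at halt
          exfalso
          have hvew : v ∈ R.erase w := Finset.mem_erase.2 ⟨Ne.symm hwv, hvR⟩
          have hqv : q ≠ v := fun h => halt v hvew (h ▸ mem_cn.2 (Or.inl rfl))
          have hqu : q ≠ u := fun h => halt v hvew (h ▸ mem_cn.2 (Or.inr huv.symm))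
          exact hPempty q hqd
            (fun z hz h5 h6 => halt z (Finset.mem_erase.2 ⟨h6, hz⟩)) hqu hqv
      · exact ⟨d, Finset.mem_erase.2 ⟨hdw, hdR⟩, hqd⟩
    have hle := hRmin.2 _ hdom
    rw [Finset.card_erase_of_mem hwR] at hle
    have hpos : 0 < R.card := Finset.card_pos.2 ⟨w, hwR⟩
    omega
  obtain ⟨hπR, hπu⟩ := claim3
  refine ⟨π, hπw.symm, hπR, hπu, hπd, ?_, ?_⟩
  · -- insert π (R.erase w) is dominating
    intro q
    obtain ⟨d, hdR, hqd⟩ := hRmin.1 q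
    by_cases hdw : d = w
    · replace hqd : q ∈ closedNbhd T w := hdw ▸ hqd
      by_cases halt : ∃ z ∈ R.erase w, q ∈ closedNbhd T z
      · obtain ⟨z, hz, hqz⟩ := halt
        exact ⟨z, Finset.mem_insert_of_mem hz, hqz⟩
      · push_neg at halt
        have hvew : v ∈ R.erase w := Finset.mem_erase.2 ⟨Ne.symm hwv, hvR⟩
        have hqv : q ≠ v := fun h => halt v hvew (h ▸ mem_cn.2 (Or.inl rfl))
        have hqu : q ≠ u := fun h => halt v hvew (h ▸ mem_cn.2 (Or.inr huv.symm))
        have := claim2 q hqd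
          (fun z hz h5 h6 => halt z (Finset.mem_erase.2 ⟨h6, hz⟩)) hqu hqv
        refine ⟨π, Finset.mem_insert_self _ _, ?_⟩
        rcases this with ⟨hqw, -, -⟩ | hqπ
        · exact hqw ▸ mem_cn.2 (Or.inr hπw)
        · exact hqπ ▸ mem_cn.2 (Or.inl rfl)
    · exact ⟨d, Finset.mem_insert_of_mem (Finset.mem_erase.2 ⟨hdw, hdR⟩), hqd⟩
  · -- insert π ((insert u (R.erase v)).erase w) is dominating
    intro q
    obtain ⟨d, hdR', hqd⟩ := hR' q
    by_cases hdw : d = w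
    · replace hqd : q ∈ closedNbhd T w := hdw ▸ hqd
      by_cases halt : ∃ z ∈ (insert u (R.erase v)).erase w, q ∈ closedNbhd T z
      · obtain ⟨z, hz, hqz⟩ := halt
        exact ⟨z, Finset.mem_insert_of_mem hz, hqz⟩
      · push_neg at halt
        have huew : u ∈ (insert u (R.erase v)).erase w :=
          Finset.mem_erase.2 ⟨Ne.symm hwu, Finset.mem_insert_self _ _⟩
        have hqu : q ≠ u := fun h => halt u huew (h ▸ mem_cn.2 (Or.inl rfl))
        have hqv : q ≠ v := fun h => halt u huew (h ▸ mem_cn.2 (Or.inr huv))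
        have hpriv : ∀ z ∈ R, z ≠ v → z ≠ w → q ∉ closedNbhd T z := by
          intro z hz hzv hzw
          exact halt z (Finset.mem_erase.2
            ⟨hzw, Finset.mem_insert_of_mem (Finset.mem_erase.2 ⟨hzv, hz⟩)⟩)
        have := claim2 q hqd hpriv hqu hqv
        refine ⟨π, Finset.mem_insert_self _ _, ?_⟩
        rcases this with ⟨hqw, -, -⟩ | hqπ
        · exact hqw ▸ mem_cn.2 (Or.inr hπw)
        · exact hqπ ▸ mem_cn.2 (Or.inl rfl)
    · exact ⟨d, Finset.mem_insert_of_mem (Finset.mem_erase.2 ⟨hdw, hdR'⟩), hqd⟩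

/-! ### Commutation identity for inserts/erases -/

lemma swap_comm_identity {R : Finset V} {u v w x : V} (hxu : x ≠ u) (hxv : x ≠ v)
    (hwu : w ≠ u) (hwv : w ≠ v) :
    insert u ((insert x (R.erase w)).erase v) = insert x ((insert u (R.erase v)).erase w) := by
  ext z
  simp only [Finset.mem_insert, Finset.mem_erase]
  constructor
  · rintro (rfl | ⟨hzv, rfl | ⟨hzw, hzR⟩⟩)
    · exact Or.inr ⟨Ne.symm hwu, Or.inl rfl⟩
    · exact Or.inl rfl
    · exact Or.inr ⟨hzw, Or.inr ⟨hzv, hzR⟩⟩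
  · rintro (rfl | ⟨hzw, rfl | ⟨hzv, hzR⟩⟩)
    · exact Or.inr ⟨hxv, Or.inl rfl⟩
    · exact Or.inl rfl
    · exact Or.inr ⟨hzv, Or.inr ⟨hzw, hzR⟩⟩

/-! ### The main induction -/

lemma key (hT : T.IsTree) {u v : V} (huv : T.Adj u v)
    (D₁ D₂ : {D : Finset V // isMinDomSet T D})
    (hvD : v ∈ D₂.1) (huD : u ∉ D₂.1) (hD1 : D₁.1 = insert u (D₂.1.erase v)) :
    ∀ n : ℕ, ∀ S : Finset V, (S.sum fun z => T.dist v z) ≤ n →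
      isMinDomSet T S → v ∈ S → u ∉ S → isDomSet T (insert u (S.erase v)) → S ≠ D₂.1 →
      ∃ D₃ D₄ : {D : Finset V // isMinDomSet T D},
        D₃ ≠ D₁ ∧ D₃ ≠ D₂ ∧ D₄ ≠ D₁ ∧ D₄ ≠ D₂ ∧ D₃ ≠ D₄ ∧
          (gammaGraph T).Adj D₂ D₃ ∧ (gammaGraph T).Adj D₃ D₄ ∧
            (gammaGraph T).Adj D₄ D₁ := by
  intro n
  induction n using Nat.strong_induction_on with
  | _ n IH =>
  intro S hμ hSmin hvS huS hS'dom hSne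
  have huvne : u ≠ v := huv.ne
  have hRmin : isMinDomSet T D₂.1 := D₂.2
  have hR'dom : isDomSet T (insert u (D₂.1.erase v)) := hD1 ▸ D₁.2.1
  -- the symmetric difference is nonempty
  have hΔne : ((D₂.1 \ S) ∪ (S \ D₂.1)).Nonempty := by
    by_contra hcon
    rw [Finset.not_nonempty_iff_eq_empty, Finset.union_eq_empty,
      Finset.sdiff_eq_empty_iff_subset, Finset.sdiff_eq_empty_iff_subset] at hcon
    exact hSne (le_antisymm hcon.2 hcon.1)
  obtain ⟨w, hwΔ, hwmax⟩ :=
    Finset.exists_max_image ((D₂.1 \ S) ∪ (S \ D₂.1)) (fun z => T.dist v z) hΔne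
  have hmax' : ∀ z, (z ∈ D₂.1 ∧ z ∉ S) ∨ (z ∈ S ∧ z ∉ D₂.1) → T.dist v z ≤ T.dist v w := by
    intro z hz
    apply hwmax
    rcases hz with ⟨h1, h2⟩ | ⟨h1, h2⟩
    · exact Finset.mem_union_left _ (Finset.mem_sdiff.2 ⟨h1, h2⟩)
    · exact Finset.mem_union_right _ (Finset.mem_sdiff.2 ⟨h1, h2⟩)
  rcases Finset.mem_union.1 hwΔ with hwRS | hwSR
  · -- w ∈ D₂ \ S : direct construction of the 4-cycle
    obtain ⟨hwR, hwS⟩ := Finset.mem_sdiff.1 hwRS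
    obtain ⟨x, hwx, hxR, hxu, hxd, hdom3, hdom4⟩ :=
      core hT huv hRmin hR'dom hSmin.1 hS'dom hvD huD hvS huS hwR hwS hmax'
    have hwv : w ≠ v := fun h => hwS (h ▸ hvS)
    have hwu : w ≠ u := fun h => huD (h ▸ hwR)
    have hxv : x ≠ v := fun h => hxR (h ▸ hvD)
    have hxw : x ≠ w := fun h => hxR (h ▸ hwR)
    have hwR' : w ∈ insert u (D₂.1.erase v) :=
      Finset.mem_insert_of_mem (Finset.mem_erase.2 ⟨hwv, hwR⟩)
    have hxR' : x ∉ insert u (D₂.1.erase v) := by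
      intro hc
      rcases Finset.mem_insert.1 hc with h | h
      · exact hxu h
      · exact hxR (Finset.mem_of_mem_erase h)
    have hmin3 : isMinDomSet T (insert x (D₂.1.erase w)) := swapMin hRmin hwR hxR hdom3
    have hmin4 : isMinDomSet T (insert x ((insert u (D₂.1.erase v)).erase w)) := by
      have := swapMin (T := T) (R := insert u (D₂.1.erase v)) (hD1 ▸ D₁.2) hwR' hxR' hdom4
      exact this
    refine ⟨⟨_, hmin3⟩, ⟨_, hmin4⟩, ?_, ?_, ?_, ?_, ?_, ?_, ?_, ?_⟩
    · -- D₃ ≠ D₁ : v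
      apply ne_of_mem_not_mem (a := v)
      · exact Finset.mem_insert_of_mem (Finset.mem_erase.2 ⟨Ne.symm hwv, hvD⟩)
      · rw [hD1]
        intro hc
        rcases Finset.mem_insert.1 hc with h | h
        · exact huvne h.symm
        · exact (Finset.mem_erase.1 h).1 rfl
    · -- D₃ ≠ D₂ : x
      exact ne_of_mem_not_mem (Finset.mem_insert_self _ _) hxR
    · -- D₄ ≠ D₁ : x
      apply ne_of_mem_not_mem (a := x) (Finset.mem_insert_self _ _)
      rw [hD1]; exact hxR'
    · -- D₄ ≠ D₂ : u
      apply ne_of_mem_not_mem (a := u)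
      · exact Finset.mem_insert_of_mem
          (Finset.mem_erase.2 ⟨Ne.symm hwu, Finset.mem_insert_self _ _⟩)
      · exact huD
    · -- D₃ ≠ D₄ : v
      apply ne_of_mem_not_mem (a := v)
        (Finset.mem_insert_of_mem (Finset.mem_erase.2 ⟨Ne.symm hwv, hvD⟩))
      intro hc
      rcases Finset.mem_insert.1 hc with h | h
      · exact hxv h.symm
      · rcases Finset.mem_insert.1 (Finset.mem_of_mem_erase h) with h' | h'
        · exact huvne h'.symm
        · exact (Finset.mem_erase.1 h').1 rfl
    · exact adj_mk hwx hwR hxR rfl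
    · -- uv-swap between D₃ and D₄
      apply adj_mk (P := ⟨_, hmin3⟩) (Q := ⟨_, hmin4⟩) huv.symm
      · exact Finset.mem_insert_of_mem (Finset.mem_erase.2 ⟨Ne.symm hwv, hvD⟩)
      · intro hc
        rcases Finset.mem_insert.1 hc with h | h
        · exact hxu h.symm
        · exact huD (Finset.mem_of_mem_erase h)
      · exact (swap_comm_identity hxu hxv hwu hwv).symm
    · -- swap back between D₄ and D₁
      apply adj_mk (P := ⟨_, hmin4⟩) hwx.symm (Finset.mem_insert_self _ _)
      · intro hc
        rcases Finset.mem_insert.1 hc with h | h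
        · exact hxw h.symm
        · exact (Finset.mem_erase.1 h).1 rfl
      · rw [Finset.erase_insert (fun hc => hxR' (Finset.mem_of_mem_erase hc)),
          Finset.insert_erase hwR', hD1]
  · -- w ∈ S \ D₂ : push S one step closer and recurse (or finish if we arrive)
    obtain ⟨hwS, hwR⟩ := Finset.mem_sdiff.1 hwSR
    have hmax'' : ∀ z, (z ∈ S ∧ z ∉ D₂.1) ∨ (z ∈ D₂.1 ∧ z ∉ S) → T.dist v z ≤ T.dist v w :=
      fun z hz => hmax' z hz.symm
    obtain ⟨x, hwx, hxS, hxu, hxd, hdomS2, hdomS2'⟩ :=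
      core hT huv hSmin hS'dom hRmin.1 hR'dom hvS huS hvD huD hwS hwR hmax''
    have hwv : w ≠ v := fun h => hwR (h ▸ hvD)
    have hwu : w ≠ u := fun h => huS (h ▸ hwS)
    have hxv : x ≠ v := fun h => hxS (h ▸ hvS)
    have hxw : x ≠ w := fun h => hxS (h ▸ hwS)
    have hS₂min : isMinDomSet T (insert x (S.erase w)) := swapMin hSmin hwS hxS hdomS2
    have hid : insert u ((insert x (S.erase w)).erase v) =
        insert x ((insert u (S.erase v)).erase w) := swap_comm_identity hxu hxv hwu hwv
    have hS₂'dom : isDomSet T (insert u ((insert x (S.erase w)).erase v)) := by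
      rw [hid]; exact hdomS2'
    have hvS₂ : v ∈ insert x (S.erase w) :=
      Finset.mem_insert_of_mem (Finset.mem_erase.2 ⟨Ne.symm hwv, hvS⟩)
    have huS₂ : u ∉ insert x (S.erase w) := by
      intro hc
      rcases Finset.mem_insert.1 hc with h | h
      · exact hxu h.symm
      · exact huS (Finset.mem_of_mem_erase h)
    by_cases hS₂R : insert x (S.erase w) = D₂.1
    · -- we arrived: the 4-cycle is D₁ D₂ S S'
      have hS'min : isMinDomSet T (insert u (S.erase v)) := swapMin hSmin hvS huS hS'dom
      have hxR : x ∈ D₂.1 := hS₂R ▸ Finset.mem_insert_self _ _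
      refine ⟨⟨S, hSmin⟩, ⟨insert u (S.erase v), hS'min⟩, ?_, ?_, ?_, ?_, ?_, ?_, ?_, ?_⟩
      · -- S ≠ D₁ : v
        apply ne_of_mem_not_mem (a := v) hvS
        rw [hD1]
        intro hc
        rcases Finset.mem_insert.1 hc with h | h
        · exact huvne h.symm
        · exact (Finset.mem_erase.1 h).1 rfl
      · exact fun h => hSne (congrArg Subtype.val h)
      · -- S' ≠ D₁
        intro hcon
        apply hSne
        have h1 : insert u (S.erase v) = insert u (D₂.1.erase v) := by
          have := congrArg Subtype.val hcon
          simpa [hD1] using this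
        have h2 : S = insert v ((insert u (S.erase v)).erase u) := by
          rw [Finset.erase_insert (fun hc => huS (Finset.mem_of_mem_erase hc)),
            Finset.insert_erase hvS]
        rw [h2, h1, Finset.erase_insert (fun hc => huD (Finset.mem_of_mem_erase hc)),
          Finset.insert_erase hvD]
      · -- S' ≠ D₂ : u
        exact ne_of_mem_not_mem (Finset.mem_insert_self _ _) huD
      · -- S ≠ S' : v
        apply ne_of_mem_not_mem (a := v) hvS
        intro hc
        rcases Finset.mem_insert.1 hc with h | h
        · exact huvne h.symm
        · exact (Finset.mem_erase.1 h).1 rfl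
      · -- Adj D₂ S
        apply adj_mk (T := T) hwx.symm hxR hwR
        have hre : D₂.1.erase x = S.erase w := by
          rw [← hS₂R, Finset.erase_insert (fun hc => hxS (Finset.mem_of_mem_erase hc))]
        rw [hre, Finset.insert_erase hwS]
      · -- Adj S S' : uv-swap
        exact adj_mk (T := T) huv.symm hvS
          (fun hc => huS hc) rfl
      · -- Adj S' D₁
        apply adj_mk (T := T) (a := w) (b := x) hwx
        · exact Finset.mem_insert_of_mem (Finset.mem_erase.2 ⟨hwv, hwS⟩)
        · intro hc
          rcases Finset.mem_insert.1 hc with h | h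
          · exact hxu h
          · exact hxS (Finset.mem_of_mem_erase h)
        · rw [hD1, ← hS₂R]
          exact (swap_comm_identity hxu hxv hwu hwv)
    · -- recurse with S₂
      have hxnotin : x ∉ S.erase w := fun hc => hxS (Finset.mem_of_mem_erase hc)
      have hsum : (insert x (S.erase w)).sum (fun z => T.dist v z) + 1 =
          S.sum (fun z => T.dist v z) := by
        rw [Finset.sum_insert hxnotin, ← Finset.add_sum_erase S (fun z => T.dist v z) hwS]
        omega
      have hlt : (insert x (S.erase w)).sum (fun z => T.dist v z) < n := by omega
      exact IH _ hlt _ le_rfl hS₂min hvS₂ huS₂ hS₂'dom hS₂R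

end Gamma17

theorem stmt17 {V : Type} [Fintype V] [DecidableEq V] (T : SimpleGraph V) (hT : T.IsTree)
    (D₁ D₂ : {D : Finset V // isMinDomSet T D}) (h : (gammaGraph T).Adj D₁ D₂) :
    (gammaGraph T).IsBridge s(D₁, D₂) ∨
      ∃ D₃ D₄ : {D : Finset V // isMinDomSet T D},
        D₃ ≠ D₁ ∧ D₃ ≠ D₂ ∧ D₄ ≠ D₁ ∧ D₄ ≠ D₂ ∧ D₃ ≠ D₄ ∧
          (gammaGraph T).Adj D₂ D₃ ∧ (gammaGraph T).Adj D₃ D₄ ∧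
            (gammaGraph T).Adj D₄ D₁ := by
  classical
  by_cases hbr : (gammaGraph T).IsBridge s(D₁, D₂)
  · exact Or.inl hbr
  right
  -- canonical form of the edge: D₁ = D₂ - v + u
  obtain ⟨v, u, hvu, hvD2, huD2, hD1⟩ := Gamma17.adj_canon h.symm
  have huv : T.Adj u v := hvu.symm
  -- a walk from D₁ to D₂ avoiding the edge
  rw [SimpleGraph.isBridge_iff_adj_and_forall_walk_mem_edges] at hbr
  push_neg at hbr
  obtain ⟨p, hp⟩ := hbr
  -- the cut-counting function
  set f : {D : Finset V // isMinDomSet T D} → ℕ :=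
    fun Y => (Y.1.filter (fun z => T.dist z u < T.dist z v)).card with hf
  have hPu : T.dist u u < T.dist u v := by
    rw [SimpleGraph.dist_self, SimpleGraph.dist_eq_one_iff_adj.2 huv]
    omega
  have hPv : ¬ T.dist v u < T.dist v v := by
    rw [SimpleGraph.dist_self]
    omega
  -- f increases along the uv-swap
  have hswap_f : ∀ (X Y : {D : Finset V // isMinDomSet T D}) (a b : V),
      a ∈ X.1 → b ∉ X.1 → Y.1 = insert b (X.1.erase a) → f X < f Y →
      (T.dist b u < T.dist b v) ∧ ¬(T.dist a u < T.dist a v) := by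
    intro X Y a b haX hbX hY hlt
    rw [hf] at hlt
    simp only at hlt
    rw [hY, Finset.filter_insert, Finset.filter_erase] at hlt
    by_cases hb : T.dist b u < T.dist b v <;> by_cases ha : T.dist a u < T.dist a v
    · exfalso
      rw [if_pos hb] at hlt
      have hbnot : b ∉ (X.1.filter (fun z => T.dist z u < T.dist z v)).erase a :=
        fun hc => hbX (Finset.mem_of_mem_filter _ (Finset.mem_of_mem_erase hc))
      rw [Finset.card_insert_of_notMem hbnot,
        Finset.card_erase_of_mem (Finset.mem_filter.2 ⟨haX, ha⟩)] at hlt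
      have hpos : 0 < (X.1.filter (fun z => T.dist z u < T.dist z v)).card :=
        Finset.card_pos.2 ⟨a, Finset.mem_filter.2 ⟨haX, ha⟩⟩
      omega
    · exact ⟨hb, ha⟩
    · exfalso
      rw [if_neg hb,
        Finset.card_erase_of_mem (Finset.mem_filter.2 ⟨haX, ha⟩)] at hlt
      omega
    · exfalso
      rw [if_neg hb, Finset.erase_eq_of_notMem
        (show a ∉ X.1.filter (fun z => T.dist z u < T.dist z v) from
          fun hc => ha (Finset.mem_filter.1 hc).2)] at hlt
      exact absurd hlt (lt_irrefl _)
  -- extract an f-increasing step from the walk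
  have hextract : ∀ {a b : {D : Finset V // isMinDomSet T D}}
      (q : (gammaGraph T).Walk a b), s(D₁, D₂) ∉ q.edges → f a < f b →
      ∃ X Y, (gammaGraph T).Adj X Y ∧ s(X, Y) ≠ s(D₁, D₂) ∧ f X < f Y := by
    intro a b q
    induction q with
    | nil => intro _ hlt; exact absurd hlt (lt_irrefl _)
    | @cons a' c' b' hadj q ih =>
      intro hedges hlt
      rw [SimpleGraph.Walk.edges_cons, List.mem_cons] at hedges
      push_neg at hedges
      obtain ⟨hhead, htail⟩ := hedges
      by_cases hfac : f a' < f c'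
      · exact ⟨a', c', hadj, fun hc => hhead hc.symm, hfac⟩
      · exact ih htail (by omega)
  -- f D₂ < f D₁
  have hfD : f D₂ < f D₁ := by
    rw [hf]
    simp only
    rw [hD1, Finset.filter_insert, if_pos hPu, Finset.filter_erase,
      Finset.erase_eq_of_notMem
        (show v ∉ D₂.1.filter (fun z => T.dist z u < T.dist z v) from
          fun hc => hPv (Finset.mem_filter.1 hc).2),
      Finset.card_insert_of_notMem (fun hc => huD2 (Finset.mem_of_mem_filter _ hc))]
    omega
  -- apply extraction to the reversed walk
  have hrev : s(D₁, D₂) ∉ p.reverse.edges := by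
    rw [SimpleGraph.Walk.edges_reverse, List.mem_reverse]
    exact hp
  obtain ⟨X, Y, hXY, hXYe, hfXY⟩ := hextract p.reverse hrev hfD
  -- canonicalize this adjacency
  obtain ⟨a, b, hab, haX, hbX, hYX⟩ := Gamma17.adj_canon hXY
  obtain ⟨hbcut, hacut⟩ := hswap_f X Y a b haX hbX hYX hfXY
  obtain ⟨hbu, hav⟩ := Gamma17.cut_lemma hT huv hab.symm hbcut hacut
  subst hbu; subst hav
  -- X is the witness
  have hSne : X.1 ≠ D₂.1 := by
    intro hXD2
    apply hXYe
    have hYD1 : Y = D₁ := by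
      apply Subtype.ext
      rw [hYX, hXD2, ← hD1]
    have hXD2' : X = D₂ := Subtype.ext hXD2
    rw [hYD1, hXD2', Sym2.eq_swap]
  have hY'dom : isDomSet T (insert b (X.1.erase a)) := by
    have := Y.2.1
    rwa [hYX] at this
  exact Gamma17.key hT huv D₁ D₂ hvD2 huD2 hD1
    (X.1.sum fun z => T.dist a z) X.1 le_rfl X.2 haX hbX hY'dom hSne
end

section
/- Let T be a tree and let W, X, Y, Z be γ-sets of T forming a 4-cycle in T(γ) (W~X~Y~Z~W). Then there exist distinct vertices a, b ∈ W and distinct vertices c, d ∉ W with a adjacent to c and b adjacent to d in T, such that X = (W \ {a}) ∪ {c}, Z = (W \ {b}) ∪ {d}, and Y = (W \ {a, b}) ∪ {c, d}. -/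
open SimpleGraph Finset

lemma swap_core {V : Type} [DecidableEq V] {s t : Finset V} (hcard : s.card = t.card)
    (hne : s ≠ t) {u v : V} (h : t = s \ {u} ∪ {v}) : u ∈ s ∧ v ∉ s := by
  by_cases hu : u ∈ s
  · by_cases hv : v ∈ s
    · exfalso
      rcases eq_or_ne v u with rfl | hvu
      · apply hne
        rw [h, Finset.sdiff_union_self_eq_union, Finset.union_eq_left.mpr
          (Finset.singleton_subset_iff.mpr hu)]
      · have hsub : {v} ⊆ s \ {u} := by
          simp [Finset.singleton_subset_iff, hv, hvu]
        have ht : t = s \ {u} := by rw [h, Finset.union_eq_left.mpr hsub]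
        have : t.card < s.card := by
          rw [ht]
          exact Finset.card_lt_card (Finset.sdiff_ssubset (by simpa) (by simp))
        omega
    · exact ⟨hu, hv⟩
  · exfalso
    have hsd : s \ {u} = s := by
      rw [Finset.sdiff_eq_self_iff_disjoint]
      simp [hu]
    rw [hsd] at h
    by_cases hv : v ∈ s
    · refine hne ?_
      rw [h, Finset.union_eq_left.mpr (Finset.singleton_subset_iff.mpr hv)]
    · have : t.card = s.card + 1 := by
        rw [h, Finset.union_comm, ← Finset.insert_eq, Finset.card_insert_of_notMem hv]
      omega

lemma swap_struct {V : Type} [Fintype V] [DecidableEq V] (T : SimpleGraph V)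
    {D₁ D₂ : {D : Finset V // isMinDomSet T D}} (h : (gammaGraph T).Adj D₁ D₂) :
    ∃ a c : V, a ∈ D₁.1 ∧ c ∉ D₁.1 ∧ T.Adj a c ∧ D₂.1 = (D₁.1 \ {a}) ∪ {c} := by
  obtain ⟨hne, u, v, huv, hc | hc⟩ := h
  · have hcard : D₁.1.card = D₂.1.card :=
      le_antisymm (D₁.2.2 _ D₂.2.1) (D₂.2.2 _ D₁.2.1)
    obtain ⟨hu, hv⟩ := swap_core hcard (fun he => hne (Subtype.ext he)) hc
    exact ⟨u, v, hu, hv, huv, hc⟩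
  · have hcard : D₂.1.card = D₁.1.card :=
      le_antisymm (D₂.2.2 _ D₁.2.1) (D₁.2.2 _ D₂.2.1)
    obtain ⟨hu, hv⟩ := swap_core hcard (fun he => hne (Subtype.ext he.symm)) hc
    refine ⟨v, u, ?_, ?_, huv.symm, ?_⟩
    · rw [hc]; simp
    · rw [hc]; simp [Finset.mem_sdiff]
      intro h'
      exact absurd h' (by rintro rfl; exact hv hu)
    · have huv' : u ≠ v := by rintro rfl; exact hv hu
      ext x
      rw [hc]
      simp only [Finset.mem_union, Finset.mem_sdiff, Finset.mem_singleton]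
      constructor
      · intro hx
        by_cases hxu : x = u
        · exact Or.inr hxu
        · exact Or.inl ⟨Or.inl ⟨hx, hxu⟩, fun hxv => hv (hxv ▸ hx)⟩
      · rintro (⟨(⟨hx, _⟩ | rfl), hxv⟩ | rfl)
        · exact hx
        · exact absurd rfl hxv
        · exact hu

lemma no4 {V : Type} (T : SimpleGraph V) (hT : T.IsAcyclic) {a b c d : V}
    (h1 : T.Adj a b) (h2 : T.Adj b c) (h3 : T.Adj c d) (h4 : T.Adj d a)
    (hac : a ≠ c) (hbd : b ≠ d) : False := by
  have hpu := (isAcyclic_iff_path_unique).mp hT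
  have := hpu (⟨Walk.cons h1 (Walk.cons h2 Walk.nil), by
      simp [Walk.isPath_def, h1.ne, h2.ne, hac]⟩ : T.Path a c)
    ⟨Walk.cons h4.symm (Walk.cons h3.symm Walk.nil), by
      simp [Walk.isPath_def, h4.ne', h3.ne', hac]⟩
  have hsupp := congrArg (fun p : T.Path a c => p.1.support) this
  simp [Walk.support_cons] at hsupp
  exact hbd hsupp

lemma pin_add {V : Type} [DecidableEq V] {Yf Zf : Finset V} {r s x : V}
    (h : Zf = Yf \ {r} ∪ {s}) (hxZ : x ∈ Zf) (hxY : x ∉ Yf) : x = s := by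
  subst h; simp only [Finset.mem_union, Finset.mem_sdiff, Finset.mem_singleton] at hxZ; tauto

lemma pin_rem {V : Type} [DecidableEq V] {Yf Zf : Finset V} {r s x : V}
    (h : Zf = Yf \ {r} ∪ {s}) (hxY : x ∈ Yf) (hxZ : x ∉ Zf) : x = r := by
  subst h; simp only [Finset.mem_union, Finset.mem_sdiff, Finset.mem_singleton] at hxZ
  push_neg at hxZ; exact (hxZ.1 hxY)

lemma auxA {V : Type} [DecidableEq V] {Wf : Finset V} {a c q : V} (hcW : c ∉ Wf) (x : V) :
    ((((x ∈ Wf ∧ x ≠ a) ∨ x = c) ∧ x ≠ c) ∨ x = q) ↔ ((x ∈ Wf ∧ x ≠ a) ∨ x = q) := by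
  by_cases h : x = c
  · subst h; simp_all
  · tauto

lemma auxW {V : Type} [DecidableEq V] {Wf : Finset V} {a : V} (haW : a ∈ Wf) (x : V) :
    ((x ∈ Wf ∧ x ≠ a) ∨ x = a) ↔ x ∈ Wf := by
  by_cases h : x = a
  · subst h; simp_all
  · tauto

lemma auxB1 {V : Type} [DecidableEq V] {Wf : Finset V} {a c p : V} (haW : a ∈ Wf)
    (hpa : p ≠ a) (hcp : c ≠ p) (x : V) :
    ((((x ∈ Wf ∧ x ≠ a) ∨ x = c) ∧ x ≠ p) ∨ x = a) ↔ ((x ∈ Wf ∧ x ≠ p) ∨ x = c) := by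
  by_cases h1 : x = a
  · subst h1
    constructor
    · intro _; exact Or.inl ⟨haW, fun h => hpa h.symm⟩
    · intro _; exact Or.inr rfl
  · by_cases h2 : x = c
    · subst h2; simp_all
    · tauto

lemma auxB2 {V : Type} [DecidableEq V] {Wf : Finset V} {a c p q : V} (hcp : c ≠ p) (x : V) :
    ((((x ∈ Wf ∧ x ≠ a) ∨ x = c) ∧ x ≠ p) ∨ x = q) ↔
      ((x ∈ Wf ∧ x ≠ a ∧ x ≠ p) ∨ x = c ∨ x = q) := by
  by_cases h : x = c
  · subst h; simp_all
  · tauto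

theorem stmt19 {V : Type} [Fintype V] [DecidableEq V] (T : SimpleGraph V) (hT : T.IsTree)
    (W X Y Z : {D : Finset V // isMinDomSet T D})
    (hWX : (gammaGraph T).Adj W X) (hXY : (gammaGraph T).Adj X Y)
    (hYZ : (gammaGraph T).Adj Y Z) (hZW : (gammaGraph T).Adj Z W)
    (hWY : W ≠ Y) (hXZ : X ≠ Z) :
    ∃ a b c d : V, a ∈ W.1 ∧ b ∈ W.1 ∧ a ≠ b ∧ c ∉ W.1 ∧ d ∉ W.1 ∧ c ≠ d ∧
      T.Adj a c ∧ T.Adj b d ∧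
      X.1 = (W.1 \ {a}) ∪ {c} ∧ Z.1 = (W.1 \ {b}) ∪ {d} ∧
      Y.1 = (W.1 \ {a, b}) ∪ {c, d} := by
  have hacy : T.IsAcyclic := hT.IsAcyclic
  obtain ⟨a, c, haW, hcW, eac, hX⟩ := swap_struct T hWX
  obtain ⟨b, d, hbW, hdW, ebd, hZ⟩ := swap_struct T hZW.symm
  obtain ⟨p, q, hpX, hqX, epq, hY⟩ := swap_struct T hXY
  obtain ⟨r, s, hrY, hsY, ers, hZ'⟩ := swap_struct T hYZ
  have hWYf : W.1 ≠ Y.1 := fun h => hWY (Subtype.ext h)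
  have hXZf : X.1 ≠ Z.1 := fun h => hXZ (Subtype.ext h)
  have hYZf : Y.1 ≠ Z.1 := fun h => hYZ.ne (Subtype.ext h)
  have mX : ∀ x, x ∈ X.1 ↔ (x ∈ W.1 ∧ x ≠ a) ∨ x = c := by
    intro x; rw [hX]; simp [Finset.mem_union, Finset.mem_sdiff]; exact Or.comm
  have mZ : ∀ x, x ∈ Z.1 ↔ (x ∈ W.1 ∧ x ≠ b) ∨ x = d := by
    intro x; rw [hZ]; simp [Finset.mem_union, Finset.mem_sdiff]; exact Or.comm
  have mY : ∀ x, x ∈ Y.1 ↔ ((x ∈ X.1 ∧ x ≠ p) ∨ x = q) := by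
    intro x; rw [hY]; simp [Finset.mem_union, Finset.mem_sdiff]; exact Or.comm
  rw [mX] at hpX hqX
  push_neg at hqX
  by_cases hpc : p = c
  · -- CASE A: p = c
    exfalso
    subst hpc
    -- now `p` plays the role of c; hcW : p ∉ W.1, eac : T.Adj a p, mX uses p
    have mY'' : ∀ x, x ∈ Y.1 ↔ (x ∈ W.1 ∧ x ≠ a) ∨ x = q := by
      intro x; rw [mY x, mX x]; exact auxA hcW x
    have hqa : q ≠ a := by
      rintro rfl
      exact hWYf (Finset.ext fun x => by rw [mY'' x]; exact (auxW haW x).symm)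
    have hqW : q ∉ W.1 := fun h => hqa (hqX.1 h)
    have hqc : q ≠ p := hqX.2
    by_cases hab : a = b
    · -- A1: a = b
      subst hab
      have hcd : p ≠ d := by
        rintro rfl
        exact hXZf (hX.trans hZ.symm)
      have hqd : q ≠ d := by
        rintro rfl
        refine hYZf (Finset.ext fun x => ?_)
        rw [mY'' x, mZ x]
      have hdY : d ∉ Y.1 := by
        rw [mY'']; push_neg
        exact ⟨fun h => absurd h hdW, fun h => hqd h.symm⟩
      have hds : d = s := pin_add hZ' ((mZ d).mpr (Or.inr rfl)) hdY
      have hqZ : q ∉ Z.1 := by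
        rw [mZ]; push_neg
        exact ⟨fun h => absurd h hqW, hqd⟩
      have hqr : q = r := pin_rem hZ' ((mY'' q).mpr (Or.inr rfl)) hqZ
      have eqd : T.Adj q d := by rw [hqr, hds]; exact ers
      exact no4 T hacy eac epq eqd ebd.symm (fun h => hqW (h ▸ haW)) hcd
    · -- A2: a ≠ b
      have haY : a ∉ Y.1 := by
        rw [mY'']; push_neg
        exact ⟨fun _ => rfl, fun h => hqa h.symm⟩
      have has : a = s := pin_add hZ' ((mZ a).mpr (Or.inl ⟨haW, hab⟩)) haY
      have hbY : b ∈ Y.1 := (mY'' b).mpr (Or.inl ⟨hbW, fun h => hab h.symm⟩)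
      have hbZ : b ∉ Z.1 := by
        rw [mZ]; push_neg
        exact ⟨fun _ => rfl, fun h => hdW (h ▸ hbW)⟩
      have hbr : b = r := pin_rem hZ' hbY hbZ
      have hqd : q = d := by
        by_contra hqd
        have hqZ : q ∉ Z.1 := by
          rw [mZ]; push_neg
          exact ⟨fun h => absurd h hqW, hqd⟩
        have := pin_rem hZ' ((mY'' q).mpr (Or.inr rfl)) hqZ
        exact hqW (this ▸ hbr ▸ hbW)
      have epd : T.Adj p d := hqd ▸ epq
      have eba : T.Adj b a := by rw [hbr, has]; exact ers
      exact no4 T hacy eac epd ebd.symm eba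
        (fun h => hdW (h ▸ haW)) (fun h => hcW (h ▸ hbW))
  · -- CASE B: p ≠ c
    have hpW : p ∈ W.1 := by rcases hpX with ⟨h, _⟩ | h; exacts [h, absurd h hpc]
    have hpa : p ≠ a := by rcases hpX with ⟨_, h⟩ | h; exacts [h, absurd h hpc]
    have hcp : c ≠ p := fun h => hcW (h ▸ hpW)
    by_cases hqa : q = a
    · -- B1: q = a
      exfalso
      subst hqa
      have mY' : ∀ x, x ∈ Y.1 ↔ (x ∈ W.1 ∧ x ≠ p) ∨ x = c := by
        intro x; rw [mY x, mX x]; exact auxB1 haW hpa hcp x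
      by_cases hbp : b = p
      · -- B1a: b = p
        subst hbp
        have hcd : c ≠ d := by
          rintro rfl
          exact hYZf (Finset.ext fun x => by rw [mY' x, mZ x])
        have hcZ : c ∉ Z.1 := by
          rw [mZ]; push_neg
          exact ⟨fun h => absurd h hcW, hcd⟩
        have hcr : c = r := pin_rem hZ' ((mY' c).mpr (Or.inr rfl)) hcZ
        have hdY : d ∉ Y.1 := by
          rw [mY']; push_neg
          exact ⟨fun h => absurd h hdW, fun h => hcd h.symm⟩
        have hds : d = s := pin_add hZ' ((mZ d).mpr (Or.inr rfl)) hdY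
        have ecd : T.Adj c d := by rw [hcr, hds]; exact ers
        exact no4 T hacy eac ecd ebd.symm epq (fun h => hdW (h ▸ haW)) hcp
      · -- B1b: b ≠ p
        have hpZ : p ∈ Z.1 := (mZ p).mpr (Or.inl ⟨hpW, fun h => hbp h.symm⟩)
        have hpY : p ∉ Y.1 := by
          rw [mY']; push_neg
          exact ⟨fun _ => rfl, fun h => hcp h.symm⟩
        have hps : p = s := pin_add hZ' hpZ hpY
        have hbY : b ∈ Y.1 := (mY' b).mpr (Or.inl ⟨hbW, hbp⟩)
        have hbZ : b ∉ Z.1 := by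
          rw [mZ]; push_neg
          exact ⟨fun _ => rfl, fun h => hdW (h ▸ hbW)⟩
        have hbr : b = r := pin_rem hZ' hbY hbZ
        have hcd : c = d := by
          by_contra hcd
          have hcZ : c ∉ Z.1 := by
            rw [mZ]; push_neg
            exact ⟨fun h => absurd h hcW, hcd⟩
          have := pin_rem hZ' ((mY' c).mpr (Or.inr rfl)) hcZ
          exact hcW (this ▸ hbr ▸ hbW)
        have hab : q ≠ b := by
          rintro rfl
          refine hXZf (hX.trans ?_)
          rw [hZ, hcd]
        have ecb : T.Adj c b := by rw [hcd]; exact ebd.symm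
        have ebp : T.Adj b p := by rw [hbr, hps]; exact ers
        exact no4 T hacy eac ecb ebp epq hab hcp
    · -- B2: q ≠ a
      have hqW : q ∉ W.1 := fun h => hqa (hqX.1 h)
      have hqc : q ≠ c := hqX.2
      have hqp : q ≠ p := epq.ne'
      have mY' : ∀ x, x ∈ Y.1 ↔ (x ∈ W.1 ∧ x ≠ a ∧ x ≠ p) ∨ x = c ∨ x = q := by
        intro x; rw [mY x, mX x]; exact auxB2 hcp x
      have haY : a ∉ Y.1 := by
        rw [mY']; push_neg
        exact ⟨fun _ h => absurd rfl h, fun h => hcW (h ▸ haW), fun h => hqW (h ▸ haW)⟩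
      have hpY : p ∉ Y.1 := by
        rw [mY']; push_neg
        exact ⟨fun _ _ => rfl, hcp.symm, hqp.symm⟩
      by_cases hba : b = a
      · -- B2a: b = a
        exfalso
        subst hba
        have hps : p = s := pin_add hZ' ((mZ p).mpr (Or.inl ⟨hpW, hpa⟩)) hpY
        have hcd : c ≠ d := by
          rintro rfl
          exact hXZf (hX.trans hZ.symm)
        have hcZ : c ∉ Z.1 := by
          rw [mZ]; push_neg
          exact ⟨fun h => absurd h hcW, hcd⟩
        have hcr : c = r := pin_rem hZ' ((mY' c).mpr (Or.inr (Or.inl rfl))) hcZ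
        have hqd : q = d := by
          by_contra hqd
          have hqZ : q ∉ Z.1 := by
            rw [mZ]; push_neg
            exact ⟨fun h => absurd h hqW, hqd⟩
          have := pin_rem hZ' ((mY' q).mpr (Or.inr (Or.inr rfl))) hqZ
          exact hqc (this.trans hcr.symm)
        have ecp : T.Adj c p := by rw [hcr, hps]; exact ers
        have eqb : T.Adj q b := by rw [hqd]; exact ebd.symm
        exact no4 T hacy eac ecp epq eqb hpa.symm hqc.symm
      · by_cases hbp : b = p
        · -- B2b: b = p
          subst hbp
          have haZ : a ∈ Z.1 := (mZ a).mpr (Or.inl ⟨haW, fun h => hba h.symm⟩)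
          have has : a = s := pin_add hZ' haZ haY
          by_cases hdq : d = q
          · -- GOOD CASE
            subst hdq
            refine ⟨a, b, c, d, haW, hbW, fun h => hba h.symm, hcW, hdW, hqc.symm,
              eac, ebd, hX, hZ, ?_⟩
            ext x
            rw [mY' x]
            simp only [Finset.mem_union, Finset.mem_sdiff, Finset.mem_insert,
              Finset.mem_singleton]
            tauto
          · exfalso
            by_cases hdc : d = c
            · subst hdc
              have hqZ : q ∉ Z.1 := by
                rw [mZ]; push_neg
                exact ⟨fun h => absurd h hqW, fun h => hdq h.symm⟩
              have hqr : q = r := pin_rem hZ' ((mY' q).mpr (Or.inr (Or.inr rfl))) hqZ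
              have eqa : T.Adj q a := by rw [hqr, has]; exact ers
              exact no4 T hacy eac ebd.symm epq eqa hpa.symm hqc.symm
            · have hcZ : c ∉ Z.1 := by
                rw [mZ]; push_neg
                exact ⟨fun h => absurd h hcW, fun h => hdc h.symm⟩
              have hcr : c = r := pin_rem hZ' ((mY' c).mpr (Or.inr (Or.inl rfl))) hcZ
              have hqZ : q ∉ Z.1 := by
                rw [mZ]; push_neg
                exact ⟨fun h => absurd h hqW, fun h => hdq h.symm⟩
              have hqr : q = r := pin_rem hZ' ((mY' q).mpr (Or.inr (Or.inr rfl))) hqZ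
              exact hqc (hqr.trans hcr.symm)
        · -- B2c: contradiction
          exfalso
          have hbY : b ∈ Y.1 := (mY' b).mpr (Or.inl ⟨hbW, hba, hbp⟩)
          have hbZ : b ∉ Z.1 := by
            rw [mZ]; push_neg
            exact ⟨fun _ => rfl, fun h => hdW (h ▸ hbW)⟩
          have hbr : b = r := pin_rem hZ' hbY hbZ
          have has : a = s := pin_add hZ' ((mZ a).mpr (Or.inl ⟨haW, fun h => hba h.symm⟩)) haY
          have hps : p = s := pin_add hZ' ((mZ p).mpr (Or.inl ⟨hpW, fun h => hbp h.symm⟩)) hpY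
          exact hpa (hps.trans has.symm)
end
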